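/- Let u be a real number, v a non-real complex number, and w its complex conjugate. Suppose a, b, c are real n×n matrices and p is an invertible complex n×n matrix such that p⁻¹ap, p⁻¹bp, p⁻¹cp are diagonal with, for each index i, the triple of i-th diagonal entries being a permutation of (u, v, w). Then n is even. -/
import Mathlib

section helpers
lemma pair_cases' {y z v w : ℂ} (h : ({y,z} : Multiset ℂ) = {v,w}) :
    (y=v∧z=w) ∨ (y=w∧z=v) := by
  have hy : y ∈ ({v,w} : Multiset ℂ) := h ▸ by simp
  simp only [Multiset.insert_eq_cons, Multiset.mem_cons, Multiset.mem_singleton] at hy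
  rcases hy with rfl | rfl
  · refine Or.inl ⟨rfl, ?_⟩
    simp only [Multiset.insert_eq_cons] at h
    simpa using (Multiset.cons_inj_right y).mp h
  · refine Or.inr ⟨rfl, ?_⟩
    rw [Multiset.pair_comm v y] at h
    simp only [Multiset.insert_eq_cons] at h
    simpa using (Multiset.cons_inj_right y).mp h

lemma triple_cases' {x y z u v w : ℂ} (h : ({x,y,z} : Multiset ℂ) = {u,v,w}) :
    (x=u∧y=v∧z=w) ∨ (x=u∧y=w∧z=v) ∨ (x=v∧y=u∧z=w) ∨ (x=v∧y=w∧z=u) ∨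
    (x=w∧y=u∧z=v) ∨ (x=w∧y=v∧z=u) := by
  have hx : x ∈ ({u,v,w} : Multiset ℂ) := h ▸ by simp
  simp only [Multiset.insert_eq_cons, Multiset.mem_cons, Multiset.mem_singleton] at hx
  simp only [Multiset.insert_eq_cons] at h
  rcases hx with rfl | rfl | rfl
  · have h2 : ({y, z} : Multiset ℂ) = {v, w} := by
      simpa [Multiset.insert_eq_cons] using (Multiset.cons_inj_right x).mp h
    rcases pair_cases' h2 with ⟨h3,h4⟩|⟨h3,h4⟩
    · exact Or.inl ⟨rfl, h3, h4⟩
    · exact Or.inr (Or.inl ⟨rfl, h3, h4⟩)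
  · rw [Multiset.cons_swap u x] at h
    have h2 : ({y, z} : Multiset ℂ) = {u, w} := by
      simpa [Multiset.insert_eq_cons] using (Multiset.cons_inj_right x).mp h
    rcases pair_cases' h2 with ⟨h3,h4⟩|⟨h3,h4⟩
    · exact Or.inr (Or.inr (Or.inl ⟨rfl, h3, h4⟩))
    · exact Or.inr (Or.inr (Or.inr (Or.inl ⟨rfl, h3, h4⟩)))
  · have e1 : (v ::ₘ ({x} : Multiset ℂ)) = x ::ₘ {v} := by
      simpa [Multiset.insert_eq_cons] using Multiset.pair_comm v x
    rw [e1, Multiset.cons_swap u x] at h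
    have h2 : ({y, z} : Multiset ℂ) = {u, v} := by
      simpa [Multiset.insert_eq_cons] using (Multiset.cons_inj_right x).mp h
    rcases pair_cases' h2 with ⟨h3,h4⟩|⟨h3,h4⟩
    · exact Or.inr (Or.inr (Or.inr (Or.inr (Or.inl ⟨rfl, h3, h4⟩))))
    · exact Or.inr (Or.inr (Or.inr (Or.inr (Or.inr ⟨rfl, h3, h4⟩))))
end helpers

theorem stmt8 {n : ℕ} (u : ℝ) (v : ℂ) (hv : v.im ≠ 0)
    (a b c : Matrix (Fin n) (Fin n) ℝ)
    (p : Matrix (Fin n) (Fin n) ℂ) (hp : IsUnit p.det)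
    (A B C : Matrix (Fin n) (Fin n) ℂ)
    (hA : A = p⁻¹ * a.map (Complex.ofReal) * p)
    (hB : B = p⁻¹ * b.map (Complex.ofReal) * p)
    (hC : C = p⁻¹ * c.map (Complex.ofReal) * p)
    (hAd : A.IsDiag) (hBd : B.IsDiag) (hCd : C.IsDiag)
    (hperm : ∀ i : Fin n,
      ({A i i, B i i, C i i} : Multiset ℂ) =
        {(u : ℂ), v, (starRingEnd ℂ) v}) :
    Even n := by
  classical
  set r := v.re with hr
  set s := v.im with hs
  have hD : (0:ℝ) < (u - r)^2 + s^2 := by positivity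
  have hDs : ((u - r)^2 + s^2) * s ≠ 0 := mul_ne_zero (ne_of_gt hD) hv
  -- real-trace facts
  have hinv : p * p⁻¹ = 1 := Matrix.mul_nonsing_inv p hp
  have htr : ∀ M : Matrix (Fin n) (Fin n) ℂ, (p⁻¹ * M * p).trace = M.trace := by
    intro M
    rw [Matrix.trace_mul_comm, ← Matrix.mul_assoc, hinv, Matrix.one_mul]
  have hofReal : Complex.ofReal = ⇑Complex.ofRealHom := rfl
  have hre : ∀ d : Matrix (Fin n) (Fin n) ℝ, ((d.map Complex.ofReal).trace).im = 0 := by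
    intro d
    simp [Matrix.trace, Matrix.diag, Complex.im_sum]
  have hSA : ∑ i, (A i i).im = 0 := by
    have : A.trace.im = 0 := by rw [hA, htr]; exact hre a
    simpa [Matrix.trace, Matrix.diag, Complex.im_sum] using this
  have hSB : ∑ i, (B i i).im = 0 := by
    have : B.trace.im = 0 := by rw [hB, htr]; exact hre b
    simpa [Matrix.trace, Matrix.diag, Complex.im_sum] using this
  have hmulAB : A * A * B = p⁻¹ * ((a*a*b).map Complex.ofReal) * p := by
    rw [hA, hB, hofReal, Matrix.map_mul, Matrix.map_mul]
    have key : ∀ M N : Matrix (Fin n) (Fin n) ℂ,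
        (p⁻¹*M*p)*(p⁻¹*N*p) = p⁻¹*(M*N)*p := by
      intro M N
      calc (p⁻¹*M*p)*(p⁻¹*N*p) = p⁻¹*M*(p*p⁻¹)*(N*p) := by
            simp only [Matrix.mul_assoc]
        _ = p⁻¹*(M*N)*p := by rw [hinv, Matrix.mul_one]; simp only [Matrix.mul_assoc]
    rw [key, key]
  have hdiagAB : ∀ i, (A * A * B) i i = (A i i)^2 * (B i i) := by
    intro i
    have h1 : (A * A) i i = A i i ^ 2 := by
      rw [Matrix.mul_apply, Finset.sum_eq_single i]
      · ring
      · intro j _ hj; rw [hAd (Ne.symm hj), zero_mul]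
      · simp
    rw [Matrix.mul_apply, Finset.sum_eq_single i]
    · rw [h1]
    · intro j _ hj; rw [hBd hj, mul_zero]
    · simp
  have hSAB : ∑ i, ((A i i)^2 * B i i).im = 0 := by
    have : (A*A*B).trace.im = 0 := by rw [hmulAB, htr]; exact hre (a*a*b)
    rw [Matrix.trace] at this
    simp only [Matrix.diag, Complex.im_sum] at this
    rw [← this]
    exact Finset.sum_congr rfl (fun i _ => by rw [hdiagAB i])
  -- the weight function
  set e : Fin n → ℝ := fun i =>
    (((u - r)^2 + s^2 - 2*u*r) * (A i i).im + (r^2 + s^2 - 2*u*r) * (B i i).im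
      + ((A i i)^2 * B i i).im) / (((u - r)^2 + s^2) * s) with he
  have hsum : ∑ i, e i = 0 := by
    rw [he]
    simp only [← Finset.sum_div, Finset.sum_add_distrib, ← Finset.mul_sum, hSA, hSB, hSAB]
    simp
  have hw : (starRingEnd ℂ v).im = -s := by simp [hs]
  have hwre : (starRingEnd ℂ v).re = r := by simp [hr]
  have hpm : ∀ i, e i = 1 ∨ e i = -1 := by
    intro i
    rcases triple_cases' (hperm i) with ⟨h1,h2,_⟩|⟨h1,h2,_⟩|⟨h1,h2,_⟩|⟨h1,h2,_⟩|⟨h1,h2,_⟩|⟨h1,h2,_⟩ <;>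
      rw [he] <;> simp only [h1, h2] <;>
      [left; right; left; left; right; right] <;>
      rw [div_eq_iff hDs] <;>
      simp only [Complex.mul_im, Complex.mul_re, Complex.ofReal_im, Complex.ofReal_re,
        Complex.conj_re, Complex.conj_im, pow_two, ← hr, ← hs] <;>
      ring
  -- counting
  have h3 : (∑ i ∈ Finset.univ.filter (fun i => e i = 1), e i)
      + ∑ i ∈ Finset.univ.filter (fun i => ¬ (e i = 1)), e i = 0 := by
    rw [Finset.sum_filter_add_sum_filter_not]; exact hsum
  have h1 : ∑ i ∈ Finset.univ.filter (fun i => e i = 1), e i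
      = (Finset.univ.filter (fun i => e i = 1)).card := by
    rw [Finset.sum_congr rfl (fun i hi => (Finset.mem_filter.mp hi).2)]
    simp
  have h2 : ∑ i ∈ Finset.univ.filter (fun i => ¬ (e i = 1)), e i
      = -((Finset.univ.filter (fun i => ¬ (e i = 1))).card : ℝ) := by
    have hall : ∀ i ∈ Finset.univ.filter (fun i => ¬ (e i = 1)), e i = -1 :=
      fun i hi => (hpm i).resolve_left (Finset.mem_filter.mp hi).2
    rw [Finset.sum_congr rfl hall]
    simp
  rw [h1, h2] at h3
  have hcard : (Finset.univ.filter (fun i => e i = 1)).card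
      = (Finset.univ.filter (fun i => ¬ (e i = 1))).card := by
    have : ((Finset.univ.filter (fun i => e i = 1)).card : ℝ)
        = ((Finset.univ.filter (fun i => ¬ (e i = 1))).card : ℝ) := by linarith
    exact_mod_cast this
  have hPQ : (Finset.univ.filter (fun i => e i = 1)).card
      + (Finset.univ.filter (fun i => ¬ (e i = 1))).card = n := by
    rw [Finset.card_filter_add_card_filter_not]
    simp
  exact ⟨(Finset.univ.filter (fun i => e i = 1)).card, by omega⟩
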